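/- Suppose kernels H_t satisfy the gradient bound |∇_x H_t(x,y)| ≤ C t^{-(n+1)/2} e^{-|x-y|²/(ct)}, and let f ∈ L^{2,λ}(ℝⁿ), 0 ≤ λ < n. For a ball B of radius r_B and f_k = f·1_{2^{k+1}B \ 2^k B} (k ≥ 1), one has for every x ∈ B and t ∈ (0, r_B²): |∫ ∇_x H_t(x,y) f_k(y) dy| ≤ C (2^k r_B)^{-1-(n-λ)/2} ‖f‖_{L^{2,λ}}, and consequently (r_B^{-λ} ∫_0^{r_B²} ∫_B |∫ ∇_x H_t(x,y) f_k(y) dy|² dx dt)^{1/2} ≤ C 2^{-k(1+(n-λ)/2)} ‖f‖_{L^{2,λ}}. -/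

import Mathlib

open MeasureTheory Metric Set Real

lemma exp_kernel_bound (n : ℕ) {c t d : ℝ} (hc : 0 < c) (ht : 0 < t) (hd : 0 < d) :
    t ^ (-((n:ℝ)+1)/2) * Real.exp (-d^2/(c*t)) ≤
      c ^ (((n:ℝ)+1)/2) * (1 + ((n:ℝ)+1)^(n+1)) * d ^ (-((n:ℝ)+1)) := by
  set ν : ℝ := (n:ℝ)+1 with hν
  have hν0 : 0 < ν := by positivity
  set u : ℝ := d^2/(c*t) with hu
  have hu0 : 0 < u := by positivity
  have htu : t = d^2/(c*u) := by rw [hu]; field_simp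
  have h1 : t ^ (-ν/2) = c ^ (ν/2) * u ^ (ν/2) * d ^ (-ν) := by
    rw [htu, Real.div_rpow (by positivity) (by positivity),
      show -ν/2 = -(ν/2) by ring, Real.rpow_neg (by positivity : (0:ℝ) ≤ c*u),
      div_inv_eq_mul, Real.mul_rpow hc.le hu0.le,
      ← Real.rpow_natCast d 2, ← Real.rpow_mul hd.le,
      show ((2:ℕ):ℝ) * -(ν/2) = -ν by push_cast; ring]
    ring
  have key : u ^ (ν/2) * Real.exp (-u) ≤ 1 + ν^(n+1) := by
    rcases le_total u 1 with h | h
    · have h2 : u ^ (ν/2) ≤ 1 := Real.rpow_le_one hu0.le h (by positivity)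
      have h3 : Real.exp (-u) ≤ 1 := Real.exp_le_one_iff.mpr (by linarith)
      nlinarith [Real.exp_pos (-u), Real.rpow_nonneg hu0.le (ν/2), pow_nonneg hν0.le (n+1)]
    · have h2 : u ^ (ν/2) ≤ u ^ (n+1) := by
        rw [← Real.rpow_natCast u (n+1)]
        refine Real.rpow_le_rpow_of_exponent_le h ?_
        push_cast; rw [← hν]; linarith
      have h4 : u ≤ ν * Real.exp (u/ν) := by
        have := Real.add_one_le_exp (u/ν)
        have h5 : u/ν ≤ Real.exp (u/ν) := by linarith [div_nonneg hu0.le hν0.le]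
        calc u = ν * (u/ν) := by field_simp
        _ ≤ ν * Real.exp (u/ν) := by nlinarith
      have h6 : u ^ (n+1) ≤ ν^(n+1) * Real.exp u := by
        calc u ^ (n+1) ≤ (ν * Real.exp (u/ν)) ^ (n+1) := pow_le_pow_left₀ hu0.le h4 (n+1)
        _ = ν^(n+1) * (Real.exp (u/ν))^(n+1) := by rw [mul_pow]
        _ = ν^(n+1) * Real.exp u := by
            rw [← Real.exp_nat_mul, show ((n+1:ℕ):ℝ) * (u/ν) = u by push_cast; rw [hν]; field_simp]
      have h7 : u ^ (n+1) * Real.exp (-u) ≤ ν^(n+1) := by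
        rw [Real.exp_neg]
        rw [mul_inv_le_iff₀ (Real.exp_pos u)]
        linarith [h6]
      have := mul_le_mul_of_nonneg_right h2 (Real.exp_pos (-u)).le
      linarith
  have hexp : -d^2/(c*t) = -u := by rw [hu]; ring
  rw [hexp]
  calc t ^ (-ν/2) * Real.exp (-u)
      = c ^ (ν/2) * d ^ (-ν) * (u ^ (ν/2) * Real.exp (-u)) := by rw [h1]; ring
    _ ≤ c ^ (ν/2) * d ^ (-ν) * (1 + ν^(n+1)) := by
        have : (0:ℝ) ≤ c ^ (ν/2) * d ^ (-ν) := by positivity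
        nlinarith
    _ = c ^ (ν/2) * (1 + ν^(n+1)) * d ^ (-ν) := by ring

lemma cauchy_schwarz_ball (n : ℕ) (f : EuclideanSpace ℝ (Fin n) → ℝ)
    (hf : AEStronglyMeasurable f volume)
    (x₀ : EuclideanSpace ℝ (Fin n)) (R : ℝ)
    (hsq : IntegrableOn (fun y => f y ^ 2) (ball x₀ R) volume) :
    ∫ y in ball x₀ R, |f y| ≤
      (∫ y in ball x₀ R, f y ^ 2) ^ ((1:ℝ)/2) * ((volume (ball x₀ R)).toReal) ^ ((1:ℝ)/2) := by
  set μ := volume.restrict (ball x₀ R) with hμ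
  haveI : IsFiniteMeasure μ := ⟨by
    rw [hμ, Measure.restrict_apply_univ]; exact measure_ball_lt_top⟩
  have hmem : MemLp f 2 μ := (memLp_two_iff_integrable_sq hf.restrict).mpr hsq
  have hmemabs : MemLp (fun y => |f y|) 2 μ := by
    simpa [Real.norm_eq_abs] using hmem.norm
  have hone : MemLp (fun _ : EuclideanSpace ℝ (Fin n) => (1:ℝ)) 2 μ := memLp_const 1
  have hpq : Real.HolderConjugate 2 2 := Real.HolderConjugate.two_two
  have h := integral_mul_le_Lp_mul_Lq_of_nonneg (μ := μ) hpq
    (Filter.Eventually.of_forall fun y => abs_nonneg (f y))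
    (Filter.Eventually.of_forall fun _ => zero_le_one)
    (by simpa using hmemabs) (by simpa using hone)
  simp only [mul_one, Real.one_rpow] at h
  have h2 : ∫ a, |f a| ^ (2:ℝ) ∂μ = ∫ a, f a ^ 2 ∂μ := by
    refine integral_congr_ae (Filter.Eventually.of_forall fun y => ?_)
    have e : |f y| ^ (2:ℝ) = |f y| ^ (2:ℕ) := by
      rw [← Real.rpow_natCast]; norm_num
    simp only [e, sq_abs]
  have h3 : ∫ _a, (1:ℝ) ∂μ = (volume (ball x₀ R)).toReal := by
    simp [hμ, integral_const, measureReal_def]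
  rw [h2, h3] at h
  exact h

set_option maxHeartbeats 2000000 in
/-- Estimate of `J_k` in the proof of part (1) of the main theorem: if the gradient
kernels satisfy `‖∇_x H_t(x,y)‖ ≤ C t^{-(n+1)/2} e^{-|x-y|²/(ct)}` and `f ∈ L^{2,λ}(ℝⁿ)`
with Morrey bound `M`, then for `f_k = f·1_{2^{k+1}B \ 2^k B}`, every `x ∈ B` and
`t ∈ (0, r_B²]`: `‖∫ ∇_x H_t(x,y) f_k(y) dy‖ ≤ C' (2^k r_B)^{-1-(n-λ)/2} M`, and
consequently `(r_B^{-λ} ∫_0^{r_B²} ∫_B ‖∫ ∇_x H_t(x,y) f_k(y) dy‖² dx dt)^{1/2} ≤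
C' 2^{-k(1+(n-λ)/2)} M`. -/
theorem gradient_kernel_annulus_estimate (n : ℕ) (lam C c : ℝ)
    (hlam0 : 0 ≤ lam) (hlamn : lam < n) (hC : 0 ≤ C) (hc : 0 < c) :
    ∃ C' > 0, ∀ (gradH : ℝ → EuclideanSpace ℝ (Fin n) → EuclideanSpace ℝ (Fin n) →
        EuclideanSpace ℝ (Fin n))
      (f : EuclideanSpace ℝ (Fin n) → ℝ) (M : ℝ), 0 ≤ M →
      (∀ t x, AEStronglyMeasurable (fun y => gradH t x y) volume) →
      (∀ (t : ℝ) (x y : EuclideanSpace ℝ (Fin n)), 0 < t →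
        ‖gradH t x y‖ ≤ C * t ^ (-((n : ℝ) + 1) / 2) * Real.exp (-(dist x y) ^ 2 / (c * t))) →
      AEStronglyMeasurable f volume →
      (∀ (x : EuclideanSpace ℝ (Fin n)) (r : ℝ), 0 < r →
        IntegrableOn (fun y => f y ^ 2) (ball x r) volume) →
      (∀ (x : EuclideanSpace ℝ (Fin n)) (r : ℝ), 0 < r →
        r ^ (-lam) * ∫ y in ball x r, f y ^ 2 ≤ M ^ 2) →
      ∀ (xB : EuclideanSpace ℝ (Fin n)) (rB : ℝ), 0 < rB → ∀ k : ℕ, 1 ≤ k →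
        (∀ x ∈ ball xB rB, ∀ t ∈ Ioc (0 : ℝ) (rB ^ 2),
          ‖∫ y in ball xB (2 ^ (k + 1) * rB) \ ball xB (2 ^ k * rB), f y • gradH t x y‖ ≤
            C' * ((2 : ℝ) ^ k * rB) ^ (-1 - ((n : ℝ) - lam) / 2) * M) ∧
        (rB ^ (-lam) * ∫ t in Ioc (0 : ℝ) (rB ^ 2), ∫ x in ball xB rB,
            ‖∫ y in ball xB (2 ^ (k + 1) * rB) \ ball xB (2 ^ k * rB),
              f y • gradH t x y‖ ^ 2) ^ ((1 : ℝ) / 2) ≤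
          C' * (2 : ℝ) ^ (-(k : ℝ) * (1 + ((n : ℝ) - lam) / 2)) * M := by
  have hn : 0 < n := by exact_mod_cast hlam0.trans_lt hlamn
  haveI : Nontrivial (EuclideanSpace ℝ (Fin n)) :=
    Module.nontrivial_of_finrank_pos (R := ℝ)
      (by rw [finrank_euclideanSpace_fin]; exact hn)
  set ν : ℝ := (n:ℝ)+1 with hν
  have hν0 : 0 < ν := by positivity
  set κ : ℝ := (volume (ball (0:EuclideanSpace ℝ (Fin n)) 1)).toReal with hκ
  have hκ0 : 0 ≤ κ := ENNReal.toReal_nonneg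
  set K1 : ℝ := C * (c ^ (ν/2) * (1 + ν^(n+1))) with hK1
  have hK10 : 0 ≤ K1 := by positivity
  set C1 : ℝ := (K1 + 1) * (Real.sqrt κ + 1) * (2:ℝ) ^ (ν + ((n:ℝ)+lam)/2) with hC1
  have hC10 : 0 < C1 := by positivity
  refine ⟨C1 * (Real.sqrt κ + 1), by positivity, ?_⟩
  intro gradH f M hM hmeas hker hf hsq hMor xB rB hrB k hk
  set P : ℝ := 2^k * rB with hP
  have hP0 : 0 < P := by positivity
  set S : Set (EuclideanSpace ℝ (Fin n)) := ball xB (2^(k+1) * rB) \ ball xB P with hS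
  set R : ℝ := 2^(k+1) * rB with hR
  have hR0 : 0 < R := by positivity
  have hR2P : R = 2 * P := by rw [hR, hP, pow_succ]; ring
  have hvol : ∀ r : ℝ, 0 ≤ r → (volume (ball xB r)).toReal = r^n * κ := by
    intro r hr
    rw [Measure.addHaar_ball volume xB hr, ENNReal.toReal_mul,
      ENNReal.toReal_ofReal (by positivity), finrank_euclideanSpace_fin, hκ]
  have hfint : ∀ r : ℝ, 0 < r → IntegrableOn f (ball xB r) volume := by
    intro r hr
    have h1 : IntegrableOn (fun y => (1 + f y^2)/2) (ball xB r) volume :=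
      ((integrableOn_const measure_ball_lt_top.ne).add (hsq xB r hr)).div_const 2
    exact Integrable.mono' h1 hf.restrict (Filter.Eventually.of_forall fun y => by
      rw [Real.norm_eq_abs]; nlinarith [sq_abs (f y), sq_nonneg (|f y| - 1)])
  -- Part 1 with constant C1
  have part1 : ∀ x ∈ ball xB rB, ∀ t ∈ Ioc (0:ℝ) (rB^2),
      ‖∫ y in S, f y • gradH t x y‖ ≤ C1 * P ^ (-1 - ((n:ℝ)-lam)/2) * M := by
    intro x hx t ht
    set K2 : ℝ := K1 * (P/2) ^ (-ν) with hK2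
    have hK20 : 0 ≤ K2 := by positivity
    have hfiR : IntegrableOn f (ball xB R) volume := hfint R hR0
    have hfiS : IntegrableOn f S volume := hfiR.mono_set diff_subset
    have hgint : Integrable (fun y => |f y| * K2) (volume.restrict S) :=
      hfiS.abs.mul_const K2
    have hrBP : 2 * rB ≤ P := by
      rw [hP]
      have h21 : (2:ℝ)^1 ≤ (2:ℝ)^k := pow_le_pow_right₀ (by norm_num) hk
      calc 2 * rB = 2^1 * rB := by norm_num
      _ ≤ 2^k * rB := mul_le_mul_of_nonneg_right h21 hrB.le
    have hptw : ∀ y ∈ S, ‖f y • gradH t x y‖ ≤ |f y| * K2 := by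
      intro y hy
      have hy2 : P ≤ dist y xB := le_of_not_gt (fun h => hy.2 (mem_ball.mpr h))
      have hxxB : dist x xB < rB := mem_ball.mp hx
      have htri : dist y xB ≤ dist y x + dist x xB := dist_triangle y x xB
      have hd : P/2 ≤ dist x y := by
        rw [dist_comm x y]; linarith
      have hd0 : 0 < dist x y := lt_of_lt_of_le (by positivity) hd
      have h1 := hker t x y ht.1
      have h2 : t ^ (-ν/2) * Real.exp (-(dist x y)^2/(c*t)) ≤
          c ^ (ν/2) * (1 + ν^(n+1)) * (dist x y) ^ (-ν) :=
        exp_kernel_bound n hc ht.1 hd0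
      have h3 : (dist x y) ^ (-ν) ≤ (P/2) ^ (-ν) :=
        Real.rpow_le_rpow_of_nonpos (by positivity) hd (by linarith)
      rw [norm_smul, Real.norm_eq_abs]
      refine mul_le_mul_of_nonneg_left ?_ (abs_nonneg _)
      calc ‖gradH t x y‖ ≤ C * t ^ (-ν/2) * Real.exp (-(dist x y)^2/(c*t)) := by
            convert h1 using 3
        _ = C * (t ^ (-ν/2) * Real.exp (-(dist x y)^2/(c*t))) := by ring
        _ ≤ C * (c ^ (ν/2) * (1 + ν^(n+1)) * (dist x y) ^ (-ν)) :=
            mul_le_mul_of_nonneg_left h2 hC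
        _ ≤ C * (c ^ (ν/2) * (1 + ν^(n+1)) * (P/2) ^ (-ν)) := by
            have h4 : (0:ℝ) ≤ c ^ (ν/2) * (1 + ν^(n+1)) := by positivity
            exact mul_le_mul_of_nonneg_left (mul_le_mul_of_nonneg_left h3 h4) hC
        _ = K2 := by rw [hK2, hK1]; ring
    have hnorm : ‖∫ y in S, f y • gradH t x y‖ ≤ ∫ y in S, |f y| * K2 :=
      norm_integral_le_of_norm_le hgint
        ((ae_restrict_iff' (measurableSet_ball.diff measurableSet_ball)).mpr
          (Filter.Eventually.of_forall hptw))
    have hmono : ∫ y in S, |f y| ≤ ∫ y in ball xB R, |f y| :=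
      setIntegral_mono_set hfiR.abs
        (Filter.Eventually.of_forall fun y => abs_nonneg (f y))
        (HasSubset.Subset.eventuallyLE diff_subset)
    have hcs := cauchy_schwarz_ball n f hf xB R (hsq xB R hR0)
    have hsqb : (∫ y in ball xB R, f y ^ 2) ^ ((1:ℝ)/2) ≤ M * R ^ (lam/2) := by
      have hMor' : ∫ y in ball xB R, f y ^ 2 ≤ M^2 * R^lam := by
        have h := hMor xB R hR0
        have hRlam : (0:ℝ) < R ^ lam := Real.rpow_pos_of_pos hR0 lam
        have hRnl : R ^ (-lam) * R ^ lam = 1 := by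
          rw [← Real.rpow_add hR0]; simp
        have h2 := mul_le_mul_of_nonneg_left h hRlam.le
        calc (∫ y in ball xB R, f y ^ 2) = R^lam * (R ^ (-lam) * ∫ y in ball xB R, f y ^ 2) := by
              rw [show R^lam * (R ^ (-lam) * ∫ y in ball xB R, f y ^ 2)
                  = (R ^ (-lam) * R^lam) * ∫ y in ball xB R, f y ^ 2 by ring, hRnl, one_mul]
        _ ≤ R^lam * M^2 := h2
        _ = M^2 * R^lam := by ring
      calc (∫ y in ball xB R, f y ^ 2) ^ ((1:ℝ)/2) ≤ (M^2 * R^lam) ^ ((1:ℝ)/2) :=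
            Real.rpow_le_rpow (integral_nonneg fun y => sq_nonneg (f y)) hMor' (by norm_num)
        _ = M * R ^ (lam/2) := by
            rw [Real.mul_rpow (sq_nonneg M) (Real.rpow_nonneg hR0.le lam),
              ← Real.rpow_natCast M 2, ← Real.rpow_mul hM,
              ← Real.rpow_mul hR0.le,
              show ((2:ℕ):ℝ) * ((1:ℝ)/2) = 1 by push_cast; ring, Real.rpow_one,
              show lam * ((1:ℝ)/2) = lam/2 by ring]
    have hvolb : ((volume (ball xB R)).toReal) ^ ((1:ℝ)/2) = R ^ ((n:ℝ)/2) * Real.sqrt κ := by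
      rw [hvol R hR0.le, Real.mul_rpow (by positivity) hκ0,
        ← Real.rpow_natCast R n, ← Real.rpow_mul hR0.le, Real.sqrt_eq_rpow,
        show ((n:ℕ):ℝ) * ((1:ℝ)/2) = (n:ℝ)/2 by push_cast; ring]
    -- assemble
    have hchain : ‖∫ y in S, f y • gradH t x y‖ ≤
        (M * R ^ (lam/2)) * (R ^ ((n:ℝ)/2) * Real.sqrt κ) * K2 := by
      have hint_abs : ∫ y in S, |f y| * K2 = (∫ y in S, |f y|) * K2 := integral_mul_const _ _
      have c1 : (∫ y in S, |f y|) * K2 ≤ (∫ y in ball xB R, |f y|) * K2 :=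
        mul_le_mul_of_nonneg_right hmono hK20
      have c2 : (∫ y in ball xB R, |f y|) ≤ (M * R ^ (lam/2)) * (R ^ ((n:ℝ)/2) * Real.sqrt κ) := by
        calc (∫ y in ball xB R, |f y|) ≤
            (∫ y in ball xB R, f y ^ 2) ^ ((1:ℝ)/2) * ((volume (ball xB R)).toReal) ^ ((1:ℝ)/2) := hcs
          _ ≤ (M * R ^ (lam/2)) * ((volume (ball xB R)).toReal) ^ ((1:ℝ)/2) :=
              mul_le_mul_of_nonneg_right hsqb (Real.rpow_nonneg ENNReal.toReal_nonneg _)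
          _ = (M * R ^ (lam/2)) * (R ^ ((n:ℝ)/2) * Real.sqrt κ) := by rw [hvolb]
      calc ‖∫ y in S, f y • gradH t x y‖ ≤ ∫ y in S, |f y| * K2 := hnorm
        _ = (∫ y in S, |f y|) * K2 := hint_abs
        _ ≤ (∫ y in ball xB R, |f y|) * K2 := c1
        _ ≤ (M * R ^ (lam/2)) * (R ^ ((n:ℝ)/2) * Real.sqrt κ) * K2 :=
            mul_le_mul_of_nonneg_right c2 hK20
    -- final algebra
    have e1 : R ^ (lam/2) = (2:ℝ) ^ (lam/2) * P ^ (lam/2) := by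
      rw [hR2P, Real.mul_rpow (by norm_num) hP0.le]
    have e2 : R ^ ((n:ℝ)/2) = (2:ℝ) ^ ((n:ℝ)/2) * P ^ ((n:ℝ)/2) := by
      rw [hR2P, Real.mul_rpow (by norm_num) hP0.le]
    have e3 : (P/2) ^ (-ν) = P ^ (-ν) * (2:ℝ) ^ ν := by
      rw [Real.div_rpow hP0.le (by norm_num), Real.rpow_neg (by norm_num : (0:ℝ) ≤ 2),
        div_inv_eq_mul]
    have e4 : P ^ (lam/2) * P ^ ((n:ℝ)/2) * P ^ (-ν) = P ^ (-1 - ((n:ℝ)-lam)/2) := by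
      rw [← Real.rpow_add hP0, ← Real.rpow_add hP0]
      congr 1; rw [hν]; ring
    have e5 : (2:ℝ) ^ (lam/2) * (2:ℝ) ^ ((n:ℝ)/2) * (2:ℝ) ^ ν
        = (2:ℝ) ^ (ν + ((n:ℝ)+lam)/2) := by
      rw [← Real.rpow_add (by norm_num : (0:ℝ) < 2), ← Real.rpow_add (by norm_num : (0:ℝ) < 2)]
      congr 1; ring
    have key : (M * R ^ (lam/2)) * (R ^ ((n:ℝ)/2) * Real.sqrt κ) * K2 ≤
        C1 * P ^ (-1 - ((n:ℝ)-lam)/2) * M := by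
      have lhs_eq : (M * R ^ (lam/2)) * (R ^ ((n:ℝ)/2) * Real.sqrt κ) * K2 =
          (K1 * Real.sqrt κ) * ((2:ℝ) ^ (ν + ((n:ℝ)+lam)/2)) *
            (P ^ (-1 - ((n:ℝ)-lam)/2)) * M := by
        rw [hK2, e1, e2, e3, ← e4, ← e5]; ring
      rw [lhs_eq, hC1]
      have hfac : K1 * Real.sqrt κ ≤ (K1 + 1) * (Real.sqrt κ + 1) := by
        nlinarith [Real.sqrt_nonneg κ]
      have h2p : (0:ℝ) ≤ (2:ℝ) ^ (ν + ((n:ℝ)+lam)/2) := by positivity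
      have hPp : (0:ℝ) ≤ P ^ (-1 - ((n:ℝ)-lam)/2) := by positivity
      nlinarith [mul_le_mul_of_nonneg_right (mul_le_mul_of_nonneg_right hfac h2p)
        (mul_nonneg hPp hM)]
    exact hchain.trans key
  constructor
  · intro x hx t ht
    have h := part1 x hx t ht
    have hPe : (0:ℝ) ≤ P ^ (-1 - ((n:ℝ)-lam)/2) := by positivity
    have h1 : C1 * P ^ (-1 - ((n:ℝ)-lam)/2) * M ≤
        C1 * (Real.sqrt κ + 1) * P ^ (-1 - ((n:ℝ)-lam)/2) * M := by
      have hfac : (1:ℝ) ≤ Real.sqrt κ + 1 := by nlinarith [Real.sqrt_nonneg κ]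
      calc C1 * P ^ (-1 - ((n:ℝ)-lam)/2) * M
          = (C1 * P ^ (-1 - ((n:ℝ)-lam)/2) * M) * 1 := by ring
        _ ≤ (C1 * P ^ (-1 - ((n:ℝ)-lam)/2) * M) * (Real.sqrt κ + 1) :=
            mul_le_mul_of_nonneg_left hfac (by positivity)
        _ = C1 * (Real.sqrt κ + 1) * P ^ (-1 - ((n:ℝ)-lam)/2) * M := by ring
    linarith
  · -- Part 2
    set e : ℝ := -1 - ((n:ℝ)-lam)/2 with he
    set A : ℝ := C1 * P ^ e * M with hA
    have hA0 : 0 ≤ A := by positivity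
    have hvolB : (volume (ball xB rB)).toReal = rB^n * κ := hvol rB hrB.le
    have h_inner : ∀ t ∈ Ioc (0:ℝ) (rB^2),
        (∫ x in ball xB rB, ‖∫ y in S, f y • gradH t x y‖^2) ≤ A^2 * (rB^n * κ) := by
      intro t ht
      by_cases hI : IntegrableOn (fun x => ‖∫ y in S, f y • gradH t x y‖^2)
        (ball xB rB) volume
      · have hb : ∀ x ∈ ball xB rB, ‖∫ y in S, f y • gradH t x y‖^2 ≤ A^2 := by
          intro x hx
          have h := part1 x hx t ht
          have h0 := norm_nonneg (∫ y in S, f y • gradH t x y)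
          nlinarith
        calc (∫ x in ball xB rB, ‖∫ y in S, f y • gradH t x y‖^2)
            ≤ ∫ _x in ball xB rB, A^2 :=
              setIntegral_mono_on hI (integrableOn_const measure_ball_lt_top.ne)
                measurableSet_ball hb
          _ = (volume (ball xB rB)).toReal * A^2 := by rw [setIntegral_const, smul_eq_mul, measureReal_def]
          _ = A^2 * (rB^n * κ) := by rw [hvolB]; ring
      · rw [integral_undef hI]; positivity
    have h_outer : (∫ t in Ioc (0:ℝ) (rB^2), ∫ x in ball xB rB,
        ‖∫ y in S, f y • gradH t x y‖^2) ≤ rB^2 * (A^2 * (rB^n * κ)) := by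
      by_cases hI : IntegrableOn (fun t => ∫ x in ball xB rB,
          ‖∫ y in S, f y • gradH t x y‖^2) (Ioc (0:ℝ) (rB^2)) volume
      · calc (∫ t in Ioc (0:ℝ) (rB^2), ∫ x in ball xB rB, ‖∫ y in S, f y • gradH t x y‖^2)
            ≤ ∫ _t in Ioc (0:ℝ) (rB^2), A^2 * (rB^n * κ) :=
              setIntegral_mono_on hI
                (integrableOn_const (by
                  rw [Real.volume_Ioc]; exact ENNReal.ofReal_ne_top))
                measurableSet_Ioc h_inner
          _ = (volume (Ioc (0:ℝ) (rB^2))).toReal * (A^2 * (rB^n * κ)) := by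
              rw [setIntegral_const, smul_eq_mul, measureReal_def]
          _ = rB^2 * (A^2 * (rB^n * κ)) := by
              rw [Real.volume_Ioc, sub_zero, ENNReal.toReal_ofReal (by positivity)]
      · rw [integral_undef hI]; positivity
    have hT0 : 0 ≤ ∫ t in Ioc (0:ℝ) (rB^2), ∫ x in ball xB rB,
        ‖∫ y in S, f y • gradH t x y‖^2 :=
      integral_nonneg fun t => integral_nonneg fun x => by positivity
    have hmul : rB ^ (-lam) * (∫ t in Ioc (0:ℝ) (rB^2), ∫ x in ball xB rB,
        ‖∫ y in S, f y • gradH t x y‖^2) ≤ rB ^ (-lam) * (rB^2 * (A^2 * (rB^n * κ))) :=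
      mul_le_mul_of_nonneg_left h_outer (Real.rpow_nonneg hrB.le _)
    have hrpow : (rB ^ (-lam) * (∫ t in Ioc (0:ℝ) (rB^2), ∫ x in ball xB rB,
        ‖∫ y in S, f y • gradH t x y‖^2)) ^ ((1:ℝ)/2) ≤
        (rB ^ (-lam) * (rB^2 * (A^2 * (rB^n * κ)))) ^ ((1:ℝ)/2) :=
      Real.rpow_le_rpow (mul_nonneg (Real.rpow_nonneg hrB.le _) hT0) hmul (by norm_num)
    -- identify the RHS as a perfect square
    set X : ℝ := C1 * Real.sqrt κ * (2:ℝ) ^ (-(k:ℝ) * (1 + ((n:ℝ)-lam)/2)) * M with hX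
    have hX0 : 0 ≤ X := by positivity
    have hsquare : rB ^ (-lam) * (rB^2 * (A^2 * (rB^n * κ))) = X^2 := by
      have p1 : P ^ e = ((2:ℝ)^k) ^ e * rB ^ e :=
        Real.mul_rpow (by positivity) hrB.le
      have p2 : ((2:ℝ)^k) ^ e = (2:ℝ) ^ ((k:ℝ) * e) := by
        rw [← Real.rpow_natCast 2 k, ← Real.rpow_mul (by norm_num : (0:ℝ) ≤ 2)]
      have p3 : (k:ℝ) * e = -(k:ℝ) * (1 + ((n:ℝ)-lam)/2) := by rw [he]; ring
      have p4 : rB ^ (-lam) * rB^2 * (rB:ℝ)^n * (rB ^ e)^2 = 1 := by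
        rw [← Real.rpow_natCast rB 2, ← Real.rpow_natCast rB n,
          ← Real.rpow_natCast (rB ^ e) 2, ← Real.rpow_mul hrB.le,
          ← Real.rpow_add hrB, ← Real.rpow_add hrB, ← Real.rpow_add hrB]
        rw [show -lam + (2:ℕ) + (n:ℕ) + e * (2:ℕ) = 0 by push_cast; rw [he]; ring]
        exact Real.rpow_zero rB
      have p5 : Real.sqrt κ ^ 2 = κ := Real.sq_sqrt hκ0
      rw [hA, hX, p1, p2, p3]
      linear_combination (C1 * (2:ℝ) ^ (-(k:ℝ) * (1 + ((n:ℝ)-lam)/2)) * M)^2 * κ * p4 - (C1 * (2:ℝ) ^ (-(k:ℝ) * (1 + ((n:ℝ)-lam)/2)) * M)^2 * p5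
    rw [hsquare] at hrpow
    have hXsq : (X^2) ^ ((1:ℝ)/2) = X := by
      rw [← Real.sqrt_eq_rpow, Real.sqrt_sq hX0]
    rw [hXsq] at hrpow
    refine hrpow.trans ?_
    rw [hX]
    have hfac : Real.sqrt κ ≤ Real.sqrt κ + 1 := by linarith
    calc C1 * Real.sqrt κ * (2:ℝ) ^ (-(k:ℝ) * (1 + ((n:ℝ)-lam)/2)) * M
        = (C1 * (2:ℝ) ^ (-(k:ℝ) * (1 + ((n:ℝ)-lam)/2)) * M) * Real.sqrt κ := by ring
      _ ≤ (C1 * (2:ℝ) ^ (-(k:ℝ) * (1 + ((n:ℝ)-lam)/2)) * M) * (Real.sqrt κ + 1) :=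
          mul_le_mul_of_nonneg_left hfac (by positivity)
      _ = C1 * (Real.sqrt κ + 1) * (2:ℝ) ^ (-(k:ℝ) * (1 + ((n:ℝ)-lam)/2)) * M := by ring
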